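/- Every principal minor of a nonsymmetric positive semidefinite matrix is nonnegative. That is, if L ∈ ℝ^{n×n} satisfies L + Lᵀ ⪰ 0 (i.e., L + Lᵀ is positive semidefinite), then for every subset S ⊆ [n], det(L_S) ≥ 0. -/

import Mathlib

open Matrix

/-- Principal submatrix of `A` indexed by `S`. -/
def pSub {ι : Type*} [DecidableEq ι] (A : Matrix ι ι ℝ) (S : Finset ι) :
    Matrix S S ℝ := A.submatrix (fun i => (i : ι)) (fun j => (j : ι))

lemma det_nonneg_of_sym_psd {m : Type*} [Fintype m] [DecidableEq m]
    (A : Matrix m m ℝ) (h : (A + Aᵀ).PosSemidef) : 0 ≤ A.det := by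
  by_contra hneg
  push_neg at hneg
  set f : ℝ → ℝ := fun t => ((1 - t) • (1 : Matrix m m ℝ) + t • A).det with hf
  have hcont : Continuous f := by
    apply Continuous.matrix_det
    fun_prop
  have hf0 : f 0 = 1 := by simp [hf]
  have hf1 : f 1 = A.det := by simp [hf]
  -- IVT: f hits 0 on [0,1]
  have : (0 : ℝ) ∈ Set.Icc (f 1) (f 0) := by
    rw [hf0, hf1]; exact ⟨le_of_lt hneg, zero_le_one⟩
  obtain ⟨t, ht, hft⟩ := intermediate_value_Icc' (by norm_num : (0:ℝ) ≤ 1)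
    hcont.continuousOn this
  -- the matrix at t is singular
  rw [hf, ← Matrix.exists_mulVec_eq_zero_iff] at hft
  obtain ⟨v, hv, hMv⟩ := hft
  -- but its quadratic form on v is positive
  have hquad : 0 ≤ v ⬝ᵥ (A *ᵥ v) := by
    have h2 := h.dotProduct_mulVec_nonneg v
    have hsym : v ⬝ᵥ ((A + Aᵀ) *ᵥ v) = 2 * (v ⬝ᵥ (A *ᵥ v)) := by
      rw [add_mulVec, dotProduct_add, mulVec_transpose, dotProduct_comm v (v ᵥ* A),
        Matrix.dotProduct_mulVec]
      ring
    simp only [star_trivial] at h2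
    nlinarith [h2, hsym]
  have hvv : 0 < v ⬝ᵥ v := by
    have : v ⬝ᵥ v = ∑ i, v i ^ 2 := by simp [dotProduct, sq]
    rw [this]
    apply Finset.sum_pos'
    · intro i _; positivity
    · obtain ⟨i, hi⟩ := Function.ne_iff.mp hv
      refine ⟨i, Finset.mem_univ i, ?_⟩
      have hvi : v i ≠ 0 := by simpa using hi
      positivity
  have hq : v ⬝ᵥ (((1 - t) • (1 : Matrix m m ℝ) + t • A) *ᵥ v) = 0 := by
    rw [hMv]; simp
  rw [add_mulVec, dotProduct_add, smul_mulVec, smul_mulVec,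
    dotProduct_smul, dotProduct_smul, one_mulVec] at hq
  have ht1 : t < 1 := by
    rcases lt_or_eq_of_le ht.2 with h' | h'
    · exact h'
    · exfalso
      subst h'
      simp only [sub_self, zero_smul, one_smul, zero_add] at hMv
      have : A.det = 0 := Matrix.exists_mulVec_eq_zero_iff.mp ⟨v, hv, hMv⟩
      linarith
  have : 0 < (1 - t) * (v ⬝ᵥ v) + t * (v ⬝ᵥ (A *ᵥ v)) := by
    have h1 : 0 < (1 - t) * (v ⬝ᵥ v) := by
      apply mul_pos (by linarith) hvv
    have h2 : 0 ≤ t * (v ⬝ᵥ (A *ᵥ v)) := mul_nonneg ht.1 hquad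
    linarith
  simp only [smul_eq_mul] at hq
  linarith

theorem nonsym_psd_principal_minor_nonneg {n : ℕ} (L : Matrix (Fin n) (Fin n) ℝ)
    (hL : (L + Lᵀ).PosSemidef) (S : Finset (Fin n)) : 0 ≤ (pSub L S).det := by
  apply det_nonneg_of_sym_psd
  have h := hL.submatrix (fun i : S => (i : Fin n))
  have : pSub L S + (pSub L S)ᵀ = (L + Lᵀ).submatrix (fun i : S => (i : Fin n)) (fun i : S => (i : Fin n)) := by
    ext i j
    simp [pSub, Matrix.submatrix, Matrix.transpose]
  rw [this]
  exact h
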